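/- There is a bijection between the set II_n of pairs of strictly increasing integer sequences (a₁ < … < a_k, b₁ < … < b_k) with 1 ≤ a_t, b_t ≤ n+1 and a_t < b_t for all t (k ranging over 0,…,n), and the set of monotone lattice paths from (0,0) to (n+1,n+1) using unit right and up steps that never pass above the diagonal. -/

import Mathlib

namespace Stmt13

/-- surplus-tracking prefix condition -/
def pok : ℕ → List Bool → Prop
  | _, [] => True
  | d, true :: l => pok (d+1) l
  | d, false :: l => 0 < d ∧ pok (d-1) l

lemma pok_iff (l : List Bool) : ∀ d, pok d l ↔
    ∀ k, (l.take k).count false ≤ d + (l.take k).count true := by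
  induction l with
  | nil => intro d; simp [pok]
  | cons c l ih =>
    intro d
    cases c with
    | true =>
      simp only [pok, ih]
      constructor
      · intro h k
        cases k with
        | zero => simp
        | succ k =>
          have := h k
          simp [List.take_succ_cons, List.count_cons] at *
          omega
      · intro h k
        have := h (k+1)
        simp [List.take_succ_cons, List.count_cons] at this
        omega
    | false =>
      simp only [pok]
      constructor
      · rintro ⟨hd, h⟩ k
        rw [ih] at h
        cases k with
        | zero => simp
        | succ k =>
          have := h k
          simp [List.take_succ_cons, List.count_cons]
          omega
      · intro h
        have h1 := h 1
        simp [List.count_cons] at h1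
        refine ⟨by omega, ?_⟩
        rw [ih]
        intro k
        have := h (k+1)
        simp [List.take_succ_cons, List.count_cons] at this
        omega

def penc (m : ℕ) : ℕ → ℕ → List ℕ → List ℕ → List Bool
  | i, j, a :: as, b :: bs =>
      List.replicate (b - 1 - i) true ++ List.replicate (a - j) false
        ++ true :: penc m b a as bs
  | i, j, _, _ => List.replicate (m - i) true ++ List.replicate (m - j) false

def pdec : ℕ → ℕ → Bool → List Bool → List ℕ × List ℕ
  | _, _, _, [] => ([], [])
  | i, j, prev, true :: l =>
      let p := pdec (i+1) j true l
      if prev then p else (j :: p.1, (i+1) :: p.2)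
  | i, j, _, false :: l => pdec i (j+1) false l

lemma penc_cons (m i j a b : ℕ) (as bs : List ℕ) :
    penc m i j (a :: as) (b :: bs) =
      List.replicate (b - 1 - i) true ++ List.replicate (a - j) false
        ++ true :: penc m b a as bs := rfl

lemma penc_nil (m i j : ℕ) :
    penc m i j [] [] = List.replicate (m - i) true ++ List.replicate (m - j) false := rfl

lemma pdec_nil (i j : ℕ) (prev : Bool) : pdec i j prev [] = ([], []) := rfl

lemma pdec_true (i j : ℕ) (prev : Bool) (l : List Bool) :
    pdec i j prev (true :: l) =
      if prev then pdec (i+1) j true l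
      else (j :: (pdec (i+1) j true l).1, (i+1) :: (pdec (i+1) j true l).2) := rfl

lemma pdec_false (i j : ℕ) (prev : Bool) (l : List Bool) :
    pdec i j prev (false :: l) = pdec i (j+1) false l := rfl

lemma pdec_replicate_true (c : ℕ) : ∀ (i j : ℕ) (l : List Bool),
    pdec i j true (List.replicate c true ++ l) = pdec (i + c) j true l := by
  induction c with
  | zero => simp
  | succ c ih =>
    intro i j l
    rw [List.replicate_succ, List.cons_append]
    show pdec (i+1) j true _ = _
    rw [ih]
    ring_nf

lemma pdec_replicate_false (c : ℕ) : ∀ (i j : ℕ) (l : List Bool),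
    pdec i j false (List.replicate c false ++ l) = pdec i (j + c) false l := by
  induction c with
  | zero => simp
  | succ c ih =>
    intro i j l
    rw [List.replicate_succ, List.cons_append]
    show pdec i (j+1) false _ = _
    rw [ih]
    ring_nf

lemma pdec_replicate_false_pos (c : ℕ) (hc : 0 < c) (i j : ℕ) (prev : Bool) (l : List Bool) :
    pdec i j prev (List.replicate c false ++ l) = pdec i (j + c) false l := by
  obtain ⟨c, rfl⟩ : ∃ c', c = c' + 1 := ⟨c - 1, by omega⟩
  rw [List.replicate_succ, List.cons_append]
  show pdec i (j+1) false _ = _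
  rw [pdec_replicate_false]
  ring_nf

lemma pdec_replicate_false_nil (c : ℕ) : ∀ (i j : ℕ) (prev : Bool),
    pdec i j prev (List.replicate c false) = ([], []) := by
  induction c with
  | zero => intro _ _ _; rfl
  | succ c ih =>
    intro i j prev
    rw [List.replicate_succ]
    show pdec i (j+1) false _ = _
    exact ih _ _ _

lemma pok_replicate_true (c : ℕ) : ∀ (d : ℕ) (l : List Bool),
    pok d (List.replicate c true ++ l) ↔ pok (d + c) l := by
  induction c with
  | zero => simp
  | succ c ih =>
    intro d l
    rw [List.replicate_succ, List.cons_append]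
    show pok (d+1) _ ↔ _
    rw [ih, show d + 1 + c = d + (c+1) by omega]

lemma pok_replicate_false (c : ℕ) : ∀ (d : ℕ) (l : List Bool), c ≤ d →
    (pok d (List.replicate c false ++ l) ↔ pok (d - c) l) := by
  induction c with
  | zero => simp
  | succ c ih =>
    intro d l hc
    rw [List.replicate_succ, List.cons_append]
    show (0 < d ∧ pok (d-1) _) ↔ _
    rw [ih (d-1) l (by omega), show d - 1 - c = d - (c+1) by omega]
    constructor
    · rintro ⟨-, h⟩; exact h
    · intro h; exact ⟨by omega, h⟩

lemma pok_replicate_false_nil (c d : ℕ) (h : c ≤ d) : pok d (List.replicate c false) := by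
  have := (pok_replicate_false c d [] h).mpr (by trivial)
  simpa using this

lemma count_true_add_count_false (l : List Bool) : l.count true + l.count false = l.length := by
  induction l with
  | nil => simp
  | cons c l ih => cases c <;> simp [List.count_cons] <;> omega

lemma pdec_bounds (l : List Bool) : ∀ (i j : ℕ) (prev : Bool),
    (∀ x ∈ (pdec i j prev l).1, j ≤ x ∧ (prev = true → j < x)) ∧
    (∀ y ∈ (pdec i j prev l).2, i < y) := by
  induction l with
  | nil => intro i j prev; simp [pdec_nil]
  | cons c l ih =>
    intro i j prev
    cases c with
    | true =>
      rw [pdec_true]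
      cases prev with
      | true =>
        simp only [if_pos rfl]
        obtain ⟨h1, h2⟩ := ih (i+1) j true
        exact ⟨fun x hx => ⟨(h1 x hx).1, fun _ => (h1 x hx).2 rfl⟩,
          fun y hy => by have := h2 y hy; omega⟩
      | false =>
        simp only [Bool.false_eq_true, if_false]
        obtain ⟨h1, h2⟩ := ih (i+1) j true
        constructor
        · intro x hx
          rcases List.mem_cons.mp hx with rfl | hx
          · exact ⟨le_refl _, by simp⟩
          · exact ⟨(h1 x hx).1, by simp⟩
        · intro y hy
          rcases List.mem_cons.mp hy with rfl | hy
          · omega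
          · have := h2 y hy; omega
    | false =>
      rw [pdec_false]
      obtain ⟨h1, h2⟩ := ih i (j+1) false
      exact ⟨fun x hx => by have := (h1 x hx).1; exact ⟨by omega, fun _ => by omega⟩,
        h2⟩

lemma pdec_false_snd (l : List Bool) : ∀ (i j : ℕ),
    (pdec i j false l).2.head? = some (i+1) ∨
    ((pdec i j false l).2 = [] ∧ l.count true = 0) := by
  induction l with
  | nil => intro i j; right; simp [pdec_nil]
  | cons c l ih =>
    intro i j
    cases c with
    | true => left; rw [pdec_true]; simp
    | false =>
      rw [pdec_false]
      rcases ih i (j+1) with h | ⟨h1, h2⟩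
      · exact Or.inl h
      · exact Or.inr ⟨h1, by simp [List.count_cons, h2]⟩


lemma pdec_spec (m : ℕ) (l : List Bool) : ∀ (i j : ℕ) (prev : Bool),
    j ≤ i → pok (i - j) l →
    i + l.count true = m → j + l.count false = m →
    (prev = false → 1 ≤ j) →
    (pdec i j prev l).1.length = (pdec i j prev l).2.length ∧
    (pdec i j prev l).1.Chain' (· < ·) ∧ (pdec i j prev l).2.Chain' (· < ·) ∧
    (∀ x ∈ (pdec i j prev l).1, 1 ≤ x) ∧
    (∀ y ∈ (pdec i j prev l).2, y ≤ m) ∧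
    (∀ t (h1 : t < (pdec i j prev l).1.length) (h2 : t < (pdec i j prev l).2.length),
      (pdec i j prev l).1[t] < (pdec i j prev l).2[t]) ∧
    penc m i j (pdec i j prev l).1 (pdec i j prev l).2 = l := by
  induction l with
  | nil =>
    intro i j prev hji hok hct hcf hprev
    simp only [List.count_nil] at hct hcf
    simp [pdec_nil, penc_nil, show m - i = 0 by omega, show m - j = 0 by omega, List.Chain', List.isChain_nil]
  | cons c l ih =>
    intro i j prev hji hok hct hcf hprev
    cases c with
    | true =>
      have hct' : (i+1) + l.count true = m := by
        simp [List.count_cons] at hct; omega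
      have hcf' : j + l.count false = m := by
        simpa [List.count_cons] using hcf
      have hok' : pok (i + 1 - j) l := by
        have : pok (i - j + 1) l := hok
        rwa [show i - j + 1 = i + 1 - j by omega] at this
      obtain ⟨IH1, IH2, IH3, IH4, IH5, IH6, IH7⟩ :=
        ih (i+1) j true (by omega) hok' hct' hcf' (by simp)
      have hbnd := pdec_bounds l (i+1) j true
      cases prev with
      | true =>
        rw [pdec_true, if_pos rfl]
        refine ⟨IH1, IH2, IH3, IH4, IH5, IH6, ?_⟩
        rcases hB : (pdec (i+1) j true l).2 with _ | ⟨b, bs⟩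
        · have hA : (pdec (i+1) j true l).1 = [] := by
            have := IH1; rw [hB] at this; exact List.length_eq_zero_iff.mp this
          rw [hA, penc_nil]
          rw [hA, hB, penc_nil] at IH7
          rw [show m - i = (m - (i+1)) + 1 by omega, List.replicate_succ, List.cons_append,
            IH7]
        · rcases hA : (pdec (i+1) j true l).1 with _ | ⟨a, as⟩
          · exfalso; have := IH1; rw [hA, hB] at this; simp at this
          · have hb : i + 1 < b := by
              apply hbnd.2; rw [hB]; exact List.mem_cons_self
            rw [penc_cons]
            rw [hA, hB, penc_cons] at IH7
            rw [show b - 1 - i = (b - 1 - (i+1)) + 1 by omega, List.replicate_succ,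
              List.cons_append, List.cons_append, IH7]
      | false =>
        rw [pdec_true]
        simp only [Bool.false_eq_true, if_false]
        have hj1 : 1 ≤ j := hprev rfl
        have him : i + 1 ≤ m := by omega
        refine ⟨by simp [IH1], ?_, ?_, ?_, ?_, ?_, ?_⟩
        · unfold List.Chain'; rw [List.isChain_cons]
          refine ⟨fun y hy => ?_, IH2⟩
          exact (hbnd.1 y (List.mem_of_mem_head? hy)).2 rfl
        · unfold List.Chain'; rw [List.isChain_cons]
          refine ⟨fun y hy => ?_, IH3⟩
          exact hbnd.2 y (List.mem_of_mem_head? hy)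
        · intro x hx
          rcases List.mem_cons.mp hx with rfl | hx
          · exact hj1
          · exact IH4 x hx
        · intro y hy
          rcases List.mem_cons.mp hy with rfl | hy
          · exact him
          · exact IH5 y hy
        · intro t h1 h2
          cases t with
          | zero => simpa using by omega
          | succ t =>
            simp only [List.getElem_cons_succ]
            exact IH6 t (by simpa using h1) (by simpa using h2)
        · rw [penc_cons]
          simp only [show (i+1) - 1 - i = 0 by omega, Nat.sub_self, List.replicate_zero,
            List.nil_append]
          rw [IH7]
    | false =>
      obtain ⟨hd, hok'⟩ := hok
      have hji' : j + 1 ≤ i := by omega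
      have hok'' : pok (i - (j+1)) l := by
        rwa [show i - (j+1) = i - j - 1 by omega]
      have hct' : i + l.count true = m := by simpa [List.count_cons] using hct
      have hcf' : (j+1) + l.count false = m := by
        simp [List.count_cons] at hcf; omega
      obtain ⟨IH1, IH2, IH3, IH4, IH5, IH6, IH7⟩ :=
        ih i (j+1) false hji' hok'' hct' hcf' (by omega)
      rw [pdec_false]
      refine ⟨IH1, IH2, IH3, IH4, IH5, IH6, ?_⟩
      have hbnd := pdec_bounds l i (j+1) false
      rcases pdec_false_snd l i (j+1) with hh | ⟨hB, hcnt⟩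
      · rcases hB : (pdec i (j+1) false l).2 with _ | ⟨b, bs⟩
        · rw [hB] at hh; simp at hh
        · have hb : b = i + 1 := by rw [hB] at hh; simp at hh; omega
          subst hb
          rcases hA : (pdec i (j+1) false l).1 with _ | ⟨a, as⟩
          · exfalso; have := IH1; rw [hA, hB] at this; simp at this
          · have ha : j + 1 ≤ a := by
              refine (hbnd.1 a ?_).1; rw [hA]; exact List.mem_cons_self
            rw [penc_cons]
            rw [hA, hB, penc_cons] at IH7
            simp only [show (i+1) - 1 - i = 0 by omega, List.replicate_zero,
              List.nil_append] at IH7 ⊢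
            rw [show a - j = (a - (j+1)) + 1 by omega, List.replicate_succ,
              List.cons_append, IH7]
      · have hA : (pdec i (j+1) false l).1 = [] := by
          have := IH1; rw [hB] at this; exact List.length_eq_zero_iff.mp this
        have him : i = m := by omega
        rw [hA, hB, penc_nil]
        rw [hA, hB, penc_nil] at IH7
        simp only [show m - i = 0 from by omega, List.replicate_zero, List.nil_append]
          at IH7 ⊢
        rw [show m - j = (m - (j+1)) + 1 by omega, List.replicate_succ, IH7]

lemma penc_spec (m : ℕ) (as : List ℕ) : ∀ (bs : List ℕ) (i j : ℕ),
    as.length = bs.length →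
    as.Chain' (· < ·) → bs.Chain' (· < ·) →
    (∀ x ∈ as, j < x) → (∀ y ∈ bs, i < y ∧ y ≤ m) →
    (∀ t (h1 : t < as.length) (h2 : t < bs.length), as[t] < bs[t]) →
    j ≤ i → i ≤ m →
    pdec i j true (penc m i j as bs) = (as, bs) ∧
    (penc m i j as bs).count true = m - i ∧
    (penc m i j as bs).count false = m - j ∧
    pok (i - j) (penc m i j as bs) := by
  induction as with
  | nil =>
    intro bs i j hlen _ _ _ _ _ hji him
    obtain rfl : bs = [] := List.length_eq_zero_iff.mp hlen.symm
    rw [penc_nil]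
    refine ⟨?_, ?_, ?_, ?_⟩
    · rw [pdec_replicate_true, pdec_replicate_false_nil]
    · simp [List.count_append, List.count_replicate]
    · simp [List.count_append, List.count_replicate]
    · rw [pok_replicate_true]
      exact pok_replicate_false_nil _ _ (by omega)
  | cons a as ih =>
    intro bs i j hlen hca hcb hma hmb hcomp hji him
    rcases bs with _ | ⟨b, bs⟩
    · simp at hlen
    have hja : j < a := hma a (List.mem_cons_self)
    have hib : i < b := (hmb b (List.mem_cons_self)).1
    have hbm : b ≤ m := (hmb b (List.mem_cons_self)).2
    have hab : a < b := by
      have := hcomp 0 (by simp) (by simp)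
      simpa using this
    have hpa := List.isChain_iff_pairwise.mp hca
    have hpb := List.isChain_iff_pairwise.mp hcb
    obtain ⟨IH1, IH2, IH3, IH4⟩ := ih bs b a (by simpa using hlen)
      (List.isChain_iff_pairwise.mpr (List.pairwise_cons.mp hpa).2)
      (List.isChain_iff_pairwise.mpr (List.pairwise_cons.mp hpb).2)
      (fun x hx => (List.pairwise_cons.mp hpa).1 x hx)
      (fun y hy => ⟨(List.pairwise_cons.mp hpb).1 y hy, (hmb y (List.mem_cons_of_mem _ hy)).2⟩)
      (fun t h1 h2 => by
        have := hcomp (t+1) (by simpa using h1) (by simpa using h2)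
        simpa using this)
      (by omega) hbm
    rw [penc_cons, List.append_assoc]
    refine ⟨?_, ?_, ?_, ?_⟩
    · rw [pdec_replicate_true, show i + (b - 1 - i) = b - 1 by omega,
        pdec_replicate_false_pos (a - j) (by omega), show j + (a - j) = a by omega,
        pdec_true]
      simp only [Bool.false_eq_true, if_false]
      rw [show b - 1 + 1 = b by omega, IH1]
    · simp only [List.count_append, List.count_cons, List.count_replicate]
      simp [IH2]
      omega
    · simp only [List.count_append, List.count_cons, List.count_replicate]
      simp [IH3]
      omega
    · rw [pok_replicate_true, show i - j + (b - 1 - i) = b - 1 - j by omega,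
        pok_replicate_false _ _ _ (by omega), show b - 1 - j - (a - j) = b - 1 - a by omega]
      show pok (b - 1 - a + 1) _
      rw [show b - 1 - a + 1 = b - a by omega]
      exact IH4

lemma length_le_of_bounds (n : ℕ) (A : List ℕ) (hc : A.Chain' (· < ·))
    (h1 : ∀ x ∈ A, 1 ≤ x) (h2 : ∀ x ∈ A, x ≤ n) : A.length ≤ n := by
  have hp := List.isChain_iff_pairwise.mp hc
  have hnd : A.Nodup := hp.imp fun h => ne_of_lt h
  have hsub : A.toFinset ⊆ Finset.Icc 1 n := by
    intro x hx
    rw [List.mem_toFinset] at hx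
    rw [Finset.mem_Icc]
    exact ⟨h1 x hx, h2 x hx⟩
  have hcard := Finset.card_le_card hsub
  rw [List.toFinset_card_of_nodup hnd, Nat.card_Icc] at hcard
  omega

end Stmt13

/-- `IIn n` : increasing couples of increasing integer sequences bounded by `1` and `n+1`:
pairs of strictly increasing lists `(a₁ < … < a_k, b₁ < … < b_k)` of equal length `k ≤ n`,
with `1 ≤ aₜ`, all `bₜ ≤ n+1`, and `aₜ < bₜ` componentwise. -/
def IIn (n : ℕ) : Set (List ℕ × List ℕ) :=
  {p | p.1.length = p.2.length ∧ p.1.length ≤ n ∧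
    p.1.Chain' (· < ·) ∧ p.2.Chain' (· < ·) ∧
    (∀ x ∈ p.1, 1 ≤ x) ∧ (∀ y ∈ p.2, y ≤ n + 1) ∧
    ∀ (t : ℕ) (h1 : t < p.1.length) (h2 : t < p.2.length), p.1[t] < p.2[t]}

/-- Monotone lattice paths from `(0,0)` to `(m,m)` never passing above the diagonal,
encoded as lists of booleans (`true` = right step, `false` = up step), with `m` steps of
each kind and each prefix containing at least as many right steps as up steps. -/
def DyckPaths (m : ℕ) : Set (List Bool) :=
  {l | l.length = 2 * m ∧ l.count true = m ∧
    ∀ k : ℕ, (l.take k).count false ≤ (l.take k).count true}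

open Stmt13

theorem stmt13 (n : ℕ) :
    Nonempty (↥(IIn n) ≃ ↥(DyckPaths (n + 1))) := by
  have hspec : ∀ p : List ℕ × List ℕ, p ∈ IIn n →
      pdec 0 0 true (penc (n+1) 0 0 p.1 p.2) = (p.1, p.2) ∧
      (penc (n+1) 0 0 p.1 p.2).count true = n + 1 ∧
      (penc (n+1) 0 0 p.1 p.2).count false = n + 1 ∧
      pok 0 (penc (n+1) 0 0 p.1 p.2) := by
    intro p hp
    obtain ⟨h1, h2, h3, h4, h5, h6, h7⟩ := hp
    have hb : ∀ y ∈ p.2, 0 < y ∧ y ≤ n + 1 := by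
      intro y hy
      refine ⟨?_, h6 y hy⟩
      obtain ⟨t, ht, rfl⟩ := List.mem_iff_getElem.mp hy
      have ht' : t < p.1.length := by omega
      have := h7 t ht' ht
      have := h5 _ (List.getElem_mem ht')
      omega
    obtain ⟨S1, S2, S3, S4⟩ := penc_spec (n+1) p.1 p.2 0 0 h1 h3 h4
      (fun x hx => h5 x hx) hb h7 (le_refl 0) (by omega)
    exact ⟨S1, by simpa using S2, by simpa using S3, by simpa using S4⟩
  have hdspec : ∀ l ∈ DyckPaths (n+1),
      (pdec 0 0 true l) ∈ IIn n ∧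
      penc (n+1) 0 0 (pdec 0 0 true l).1 (pdec 0 0 true l).2 = l := by
    intro l hl
    obtain ⟨hlen, hct, hpre⟩ := hl
    have hcf : l.count false = n + 1 := by
      have := count_true_add_count_false l
      omega
    have hok : pok 0 l := by
      rw [pok_iff]
      intro k
      simpa using hpre k
    obtain ⟨D1, D2, D3, D4, D5, D6, D7⟩ := pdec_spec (n+1) l 0 0 true (le_refl 0)
      (by simpa using hok) (by simpa using hct) (by simpa using hcf) (by simp)
    refine ⟨⟨D1, ?_, D2, D3, D4, D5, D6⟩, D7⟩
    refine length_le_of_bounds n _ D2 D4 ?_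
    intro x hx
    obtain ⟨t, ht, rfl⟩ := List.mem_iff_getElem.mp hx
    have ht' : t < (pdec 0 0 true l).2.length := by omega
    have := D6 t ht ht'
    have := D5 _ (List.getElem_mem ht')
    omega
  refine ⟨{
    toFun := fun p => ⟨penc (n+1) 0 0 p.1.1 p.1.2, ?_, ?_, ?_⟩
    invFun := fun l => ⟨pdec 0 0 true l.1, (hdspec l.1 l.2).1⟩
    left_inv := ?_
    right_inv := ?_ }⟩
  · have := (hspec p.1 p.2).2.1
    have h2 := (hspec p.1 p.2).2.2.1
    have := count_true_add_count_false (penc (n+1) 0 0 p.1.1 p.1.2)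
    omega
  · exact (hspec p.1 p.2).2.1
  · intro k
    have := (pok_iff (penc (n+1) 0 0 p.1.1 p.1.2) 0).mp (hspec p.1 p.2).2.2.2 k
    simpa using this
  · intro p
    apply Subtype.ext
    simpa using (hspec p.1 p.2).1
  · intro l
    apply Subtype.ext
    exact (hdspec l.1 l.2).2
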